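/- Let $N$ be an $R$-module, $h_1, \ldots, h_k$ an $N$-regular sequence in $R$, and $J = \langle h_1, \ldots, h_k \rangle$. If $F(y_1, \ldots, y_k)$ is a homogeneous polynomial of degree $r$ with coefficients in $N$ and $F(h_1, \ldots, h_k) \in J^{r+1} N$, then all coefficients of $F$ lie in $J N$. -/

import Mathlib

open Finset RingTheory.Sequence Submodule

namespace ReesAux

lemma split_sum {M : Type*} [AddCommMonoid M] {k r : ℕ} (f : (Fin (k+1) → ℕ) → M) :
    ∑ e ∈ Finset.Nat.antidiagonalTuple (k+1) r, f e
      = ∑ i ∈ Finset.range (r+1), ∑ d ∈ Finset.Nat.antidiagonalTuple k (r - i),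
          f (Fin.snoc d i) := by
  conv_rhs => rw [Finset.sum_sigma']
  refine Finset.sum_nbij' (fun e => ⟨e (Fin.last k), Fin.init e⟩)
    (fun p => Fin.snoc p.2 p.1) ?_ ?_ ?_ ?_ ?_
  · intro e he
    rw [Finset.Nat.mem_antidiagonalTuple] at he
    rw [Fin.sum_univ_castSucc] at he
    refine Finset.mem_sigma.mpr ⟨?_, ?_⟩
    · exact Finset.mem_range.mpr (Nat.lt_succ_of_le (he ▸ Nat.le_add_left _ _))
    · rw [Finset.Nat.mem_antidiagonalTuple]
      have heq : ∑ i : Fin k, Fin.init e i = ∑ i : Fin k, e i.castSucc :=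
        Finset.sum_congr rfl fun i _ => rfl
      rw [heq]
      exact Nat.eq_sub_of_add_eq he
  · intro p hp
    obtain ⟨hp1, hp2⟩ := Finset.mem_sigma.mp hp
    rw [Finset.mem_range, Nat.lt_succ_iff] at hp1
    rw [Finset.Nat.mem_antidiagonalTuple] at hp2 ⊢
    rw [Fin.sum_univ_castSucc]
    simp only [Fin.snoc_castSucc, Fin.snoc_last]
    rw [hp2]
    omega
  · intro e _; exact Fin.snoc_init_self e
  · intro p hp
    ext
    · simp
    · simp
  · intro e _
    rw [Fin.snoc_init_self]

variable {R N : Type} [CommRing R] [AddCommGroup N] [Module R N]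

/-- The monomial `∏ hᵢ^dᵢ`. -/
def mon {k : ℕ} (h : Fin k → R) (d : Fin k → ℕ) : R := ∏ i, h i ^ d i

/-- Value at `h` of the homogeneous polynomial of degree `t` with coefficients `C`. -/
def val {k : ℕ} (h : Fin k → R) (t : ℕ) (C : (Fin k → ℕ) → N) : N :=
  ∑ d ∈ Finset.Nat.antidiagonalTuple k t, mon h d • C d

lemma val_add {k : ℕ} (h : Fin k → R) (t : ℕ) (C₁ C₂ : (Fin k → ℕ) → N) :
    val h t (C₁ + C₂) = val h t C₁ + val h t C₂ := by
  simp [val, smul_add, Finset.sum_add_distrib]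

lemma val_rsmul {k : ℕ} (h : Fin k → R) (t : ℕ) (r : R) (C : (Fin k → ℕ) → N) :
    val h t (fun d => r • C d) = r • val h t C := by
  simp [val, Finset.smul_sum, smul_comm r]

lemma val_zero {k : ℕ} (h : Fin k → R) (t : ℕ) :
    val h t (0 : (Fin k → ℕ) → N) = 0 := by simp [val]

lemma val_sub {k : ℕ} (h : Fin k → R) (t : ℕ) (C₁ C₂ : (Fin k → ℕ) → N) :
    val h t (fun d => C₁ d - C₂ d) = val h t C₁ - val h t C₂ := by
  simp [val, smul_sub, Finset.sum_sub_distrib]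

lemma adT_zero (k : ℕ) : Finset.Nat.antidiagonalTuple k 0 = {0} := by
  ext d
  simp only [Finset.Nat.mem_antidiagonalTuple, Finset.mem_singleton,
    Finset.sum_eq_zero_iff, Finset.mem_univ, true_implies]
  constructor
  · intro h; funext i; exact h i
  · intro h i; rw [h]; rfl

lemma mon_add_single {k : ℕ} (h : Fin k → R) (d : Fin k → ℕ) (i : Fin k) :
    mon h (d + Pi.single i 1) = h i * mon h d := by
  simp only [mon, Pi.add_apply, pow_add]
  rw [Finset.prod_mul_distrib, mul_comm]
  congr 1
  rw [Finset.prod_eq_single i (fun j _ hj => by simp [Pi.single_eq_of_ne hj])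
    (by simp)]
  simp

lemma prod_pow_mem {k : ℕ} {h : Fin k → R} {I : Ideal R} (hI : ∀ i, h i ∈ I)
    (s : Finset (Fin k)) (d : Fin k → ℕ) :
    (∏ i ∈ s, h i ^ d i) ∈ I ^ (∑ i ∈ s, d i) := by
  classical
  induction s using Finset.induction_on with
  | empty => simp
  | @insert a s ha ih =>
    rw [Finset.prod_insert ha, Finset.sum_insert ha, pow_add]
    exact Ideal.mul_mem_mul (Ideal.pow_mem_pow (hI a) _) ih

lemma mon_mem_pow {k : ℕ} (h : Fin k → R) {t : ℕ} {d : Fin k → ℕ}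
    (hd : d ∈ Finset.Nat.antidiagonalTuple k t) :
    mon h d ∈ (Ideal.span (Set.range h)) ^ t := by
  have := prod_pow_mem (I := Ideal.span (Set.range h))
    (fun i => Ideal.subset_span ⟨i, rfl⟩) Finset.univ d
  rwa [Finset.Nat.mem_antidiagonalTuple.mp hd] at this

lemma val_mem_pow_smul {k : ℕ} (h : Fin k → R) (t : ℕ) (C : (Fin k → ℕ) → N) :
    val h t C ∈ (Ideal.span (Set.range h)) ^ t • (⊤ : Submodule R N) :=
  Submodule.sum_mem _ fun d hd =>
    Submodule.smul_mem_smul (mon_mem_pow h hd) Submodule.mem_top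

lemma smul_val_repr {k : ℕ} (h : Fin k → R) {x : R}
    (hx : x ∈ Ideal.span (Set.range h)) (t : ℕ) (C : (Fin k → ℕ) → N) :
    ∃ C', x • val h t C = val h (t+1) C' := by
  classical
  induction hx using Submodule.span_induction with
  | mem y hy =>
    obtain ⟨i, rfl⟩ := hy
    have hmem : ∀ d ∈ Finset.Nat.antidiagonalTuple k t,
        d + Pi.single i 1 ∈ Finset.Nat.antidiagonalTuple k (t+1) := by
      intro d hd
      rw [Finset.Nat.mem_antidiagonalTuple] at hd ⊢
      simp [Finset.sum_add_distrib, hd, Finset.sum_pi_single']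
    refine ⟨fun e => ∑ d ∈ Finset.Nat.antidiagonalTuple k t,
      (if e = d + Pi.single i 1 then C d else 0), ?_⟩
    symm
    calc ∑ e ∈ Finset.Nat.antidiagonalTuple k (t+1),
            mon h e • (∑ d ∈ Finset.Nat.antidiagonalTuple k t,
              if e = d + Pi.single i 1 then C d else 0)
        = ∑ e ∈ Finset.Nat.antidiagonalTuple k (t+1),
            ∑ d ∈ Finset.Nat.antidiagonalTuple k t,
              (if e = d + Pi.single i 1 then mon h e • C d else 0) := by
          refine Finset.sum_congr rfl fun e _ => ?_
          rw [Finset.smul_sum]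
          exact Finset.sum_congr rfl fun d _ => by split <;> simp
      _ = ∑ d ∈ Finset.Nat.antidiagonalTuple k t,
            ∑ e ∈ Finset.Nat.antidiagonalTuple k (t+1),
              (if e = d + Pi.single i 1 then mon h e • C d else 0) :=
          Finset.sum_comm
      _ = ∑ d ∈ Finset.Nat.antidiagonalTuple k t,
            mon h (d + Pi.single i 1) • C d := by
          refine Finset.sum_congr rfl fun d hd => ?_
          rw [Finset.sum_ite_eq' _ _ (fun e => mon h e • C d), if_pos (hmem d hd)]
      _ = h i • val h t C := by
          rw [val, Finset.smul_sum]
          exact Finset.sum_congr rfl fun d _ => by rw [mon_add_single, mul_smul]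
  | zero => exact ⟨0, by rw [zero_smul, val_zero]⟩
  | add x y hx hy ihx ihy =>
    obtain ⟨C₁, h₁⟩ := ihx
    obtain ⟨C₂, h₂⟩ := ihy
    exact ⟨C₁ + C₂, by rw [add_smul, h₁, h₂, val_add]⟩
  | smul a x hx ihx =>
    obtain ⟨C', hC'⟩ := ihx
    exact ⟨fun d => a • C' d, by rw [smul_assoc, hC', val_rsmul]⟩

lemma pow_smul_repr {k : ℕ} (h : Fin k → R) (t : ℕ) {x : N}
    (hx : x ∈ (Ideal.span (Set.range h)) ^ t • (⊤ : Submodule R N)) :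
    ∃ C, x = val h t C := by
  induction t generalizing x with
  | zero =>
    refine ⟨fun _ => x, ?_⟩
    rw [val, adT_zero, Finset.sum_singleton]
    simp [mon]
  | succ t ih =>
    rw [pow_succ', mul_smul] at hx
    refine Submodule.smul_induction_on hx ?_ ?_
    · intro r hr n hn
      obtain ⟨C, hC⟩ := ih hn
      obtain ⟨C', hC'⟩ := smul_val_repr h hr t C
      exact ⟨C', by rw [hC, hC']⟩
    · rintro x y ⟨C₁, h₁⟩ ⟨C₂, h₂⟩
      exact ⟨C₁ + C₂, by rw [h₁, h₂, val_add]⟩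

lemma ideal_ofList_ofFn {m : ℕ} (g : Fin m → R) :
    Ideal.ofList (List.ofFn g) = Ideal.span (Set.range g) := by
  apply congrArg Ideal.span
  ext x
  simp [List.mem_ofFn]

lemma weak_prefix_and_last {k : ℕ} (h : Fin (k+1) → R)
    (hw : IsWeaklyRegular N (List.ofFn h)) :
    IsWeaklyRegular N (List.ofFn (fun i : Fin k => h i.castSucc)) ∧
      (∀ b : N, h (Fin.last k) • b ∈
          Ideal.span (Set.range (fun i : Fin k => h i.castSucc)) • (⊤ : Submodule R N) →
        b ∈ Ideal.span (Set.range (fun i : Fin k => h i.castSucc)) • (⊤ : Submodule R N)) := by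
  rw [List.ofFn_succ', List.concat_eq_append, isWeaklyRegular_append_iff] at hw
  obtain ⟨hw1, hw2⟩ := hw
  refine ⟨hw1, ?_⟩
  rw [isWeaklyRegular_singleton_iff] at hw2
  intro b hb
  rw [← ideal_ofList_ofFn] at hb ⊢
  have h0 : Submodule.Quotient.mk (p := Ideal.ofList
      (List.ofFn (fun i : Fin k => h i.castSucc)) • (⊤ : Submodule R N)) (h (Fin.last k) • b)
      = 0 := (Submodule.Quotient.mk_eq_zero _).mpr hb
  rw [Submodule.Quotient.mk_smul] at h0
  have := hw2 (by rw [h0, smul_zero] :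
    h (Fin.last k) • Submodule.Quotient.mk b = h (Fin.last k) • (0 : _))
  rw [← Submodule.Quotient.mk_eq_zero]
  exact this

lemma mon_snoc {k : ℕ} (h : Fin (k+1) → R) (d : Fin k → ℕ) (i : ℕ) :
    mon h (Fin.snoc d i) = (h (Fin.last k))^i * mon (fun j => h j.castSucc) d := by
  unfold mon
  rw [Fin.prod_univ_castSucc]
  simp only [Fin.snoc_castSucc, Fin.snoc_last]
  rw [mul_comm]

lemma val_split {k : ℕ} (h : Fin (k+1) → R) (t : ℕ) (C : (Fin (k+1) → ℕ) → N) :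
    val h t C = ∑ i ∈ Finset.range (t+1),
      (h (Fin.last k))^i • val (fun j => h j.castSucc) (t-i) (fun d => C (Fin.snoc d i)) := by
  rw [val, split_sum (fun e => mon h e • C e)]
  refine Finset.sum_congr rfl fun i _ => ?_
  rw [val, Finset.smul_sum]
  refine Finset.sum_congr rfl fun d _ => ?_
  rw [mon_snoc, mul_smul]

/-- The core of Rees's theorem, by induction on the length of the sequence. -/
theorem core : ∀ (k : ℕ) (h : Fin k → R), IsWeaklyRegular N (List.ofFn h) →
    ∀ (r : ℕ) (G : (Fin k → ℕ) → N),
      val h r G ∈ (Ideal.span (Set.range h)) ^ (r+1) • (⊤ : Submodule R N) →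
      ∀ d ∈ Finset.Nat.antidiagonalTuple k r,
        G d ∈ Ideal.span (Set.range h) • (⊤ : Submodule R N) := by
  intro k
  induction k with
  | zero =>
    intro h _ r G hF d hd
    have hr : r = 0 := by
      have := Finset.Nat.mem_antidiagonalTuple.mp hd
      simpa using this.symm
    subst hr
    have hsp : Ideal.span (Set.range h) = ⊥ := by
      rw [Set.range_eq_empty h, Ideal.span_empty]
    rw [hsp, pow_one, Submodule.bot_smul, Submodule.mem_bot] at hF
    have hd0 : d = 0 := Subsingleton.elim _ _
    have hval : val h 0 G = G d := by
      rw [val, adT_zero, Finset.sum_singleton, ← hd0]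
      simp [mon, Subsingleton.elim (0 : Fin 0 → ℕ) d]
    rw [← hval, hF]
    exact zero_mem _
  | succ k IH =>
    intro h hw r G hF
    set h' : Fin k → R := fun i => h i.castSucc with hh'
    set z : R := h (Fin.last k) with hz
    set J' : Ideal R := Ideal.span (Set.range h') with hJ'
    obtain ⟨hw', hzreg⟩ := weak_prefix_and_last h hw
    -- the colon lemma for powers of J'
    have Z : ∀ (t : ℕ) (b : N), z • b ∈ J' ^ t • (⊤ : Submodule R N) →
        b ∈ J' ^ t • (⊤ : Submodule R N) := by
      intro t
      induction t with
      | zero => intro b _; rw [pow_zero, one_smul]; exact Submodule.mem_top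
      | succ t iht =>
        intro b hb
        have hb' : b ∈ J' ^ t • (⊤ : Submodule R N) :=
          iht b (Submodule.smul_mono_left (Ideal.pow_le_pow_right (Nat.le_succ t)) hb)
        obtain ⟨P, hP⟩ := pow_smul_repr h' t hb'
        have hbval : val h' t (fun d => z • P d) ∈ J' ^ (t+1) • (⊤ : Submodule R N) := by
          rw [val_rsmul, ← hP]; exact hb
        have hcoef := IH h' hw' t (fun d => z • P d) hbval
        rw [hP, val]
        refine Submodule.sum_mem _ fun d hd => ?_
        have hPd : P d ∈ J' • (⊤ : Submodule R N) := hzreg (P d) (hcoef d hd)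
        have : mon h' d • P d ∈ J' ^ t • (J' • (⊤ : Submodule R N)) :=
          Submodule.smul_mem_smul (mon_mem_pow h' hd) hPd
        rwa [← mul_smul, ← pow_succ] at this
    -- decompose the value of G along powers of z
    obtain ⟨Cc, hCc⟩ := pow_smul_repr h (r+1) hF
    set B : ℕ → N := fun i => val h' (r-i) (fun d => G (Fin.snoc d i)) with hB
    set u : ℕ → N := fun j => val h' (r+1-j) (fun d => Cc (Fin.snoc d j)) with hu
    have hsplit1 : val h r G = ∑ i ∈ Finset.range (r+1), z ^ i • B i := val_split h r G
    have hsplit2 : val h (r+1) Cc = ∑ j ∈ Finset.range (r+2), z ^ j • u j :=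
      val_split h (r+1) Cc
    set A : ℕ → N := fun j => (if j ≤ r then B j else 0) - u j with hA
    have hA0 : ∑ j ∈ Finset.range (r+2), z ^ j • A j = 0 := by
      have e1 : ∑ j ∈ Finset.range (r+2), z ^ j • (if j ≤ r then B j else 0)
          = ∑ j ∈ Finset.range (r+1), z ^ j • B j := by
        rw [← Finset.sum_subset (Finset.range_subset_range.mpr (Nat.le_succ (r+1)))
          (fun j _ hj => by
            rw [if_neg (fun hle => hj (Finset.mem_range.mpr (Nat.lt_succ_of_le hle))),
              smul_zero])]
        exact Finset.sum_congr rfl fun j hj => by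
          rw [if_pos (Nat.lt_succ_iff.mp (Finset.mem_range.mp hj))]
      calc ∑ j ∈ Finset.range (r+2), z ^ j • A j
          = ∑ j ∈ Finset.range (r+2), (z ^ j • (if j ≤ r then B j else 0) - z ^ j • u j) := by
            refine Finset.sum_congr rfl fun j _ => ?_
            simp only [hA]
            rw [smul_sub]
        _ = (∑ j ∈ Finset.range (r+2), z ^ j • (if j ≤ r then B j else 0))
              - ∑ j ∈ Finset.range (r+2), z ^ j • u j := Finset.sum_sub_distrib _ _
        _ = 0 := by rw [e1, ← hsplit1, ← hsplit2, hCc, sub_self]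
    have hAmem : ∀ j, j ≤ r + 1 → A j ∈ J' ^ (r - j) • (⊤ : Submodule R N) := by
      intro j hj
      refine Submodule.sub_mem _ ?_ ?_
      · by_cases hjr : j ≤ r
        · rw [if_pos hjr]; exact val_mem_pow_smul h' (r-j) _
        · rw [if_neg hjr]; exact zero_mem _
      · exact Submodule.smul_mono_left
          (Ideal.pow_le_pow_right (Nat.sub_le_sub_right (Nat.le_succ r) j))
          (val_mem_pow_smul h' (r+1-j) _)
    set T : ℕ → N := fun i => ∑ j ∈ Finset.Ico i (r+2), z ^ (j-i) • A j with hT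
    have hT0 : T 0 = 0 := by
      have e : T 0 = ∑ j ∈ Finset.Ico 0 (r+2), z ^ (j - 0) • A j := rfl
      rw [e, ← Finset.range_eq_Ico, ← hA0]
      exact Finset.sum_congr rfl fun j _ => by rw [Nat.sub_zero]
    have hTrec : ∀ i, i ≤ r + 1 → T i = A i + z • T (i+1) := by
      intro i hi
      show ∑ j ∈ Finset.Ico i (r+2), z ^ (j - i) • A j
        = A i + z • ∑ j ∈ Finset.Ico (i+1) (r+2), z ^ (j - (i+1)) • A j
      rw [Finset.sum_eq_sum_Ico_succ_bot (by omega : i < r+2)]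
      simp only [Nat.sub_self, pow_zero, one_smul]
      congr 1
      rw [Finset.smul_sum]
      refine Finset.sum_congr rfl fun j hj => ?_
      obtain ⟨hj1, _⟩ := Finset.mem_Ico.mp hj
      rw [smul_smul, ← pow_succ']
      congr 2
      omega
    have hTmem : ∀ i, 1 ≤ i → i ≤ r + 2 → T i ∈ J' ^ (r + 1 - i) • (⊤ : Submodule R N) := by
      intro i
      induction i with
      | zero => omega
      | succ i ihi =>
        intro _ hi2
        rcases Nat.eq_zero_or_pos i with rfl | hipos
        · -- i + 1 = 1
          have h1 : z • T 1 = -A 0 := by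
            have h2 := hTrec 0 (by omega)
            rw [hT0] at h2
            exact eq_neg_of_add_eq_zero_right h2.symm
          have : z • T 1 ∈ J' ^ r • (⊤ : Submodule R N) := by
            rw [h1]
            exact Submodule.neg_mem _ (by simpa using hAmem 0 (by omega))
          simpa using Z r (T 1) this
        · have hTi := ihi hipos (by omega)
          have hstep : z • T (i+1) = T i - A i := by
            have h2 := hTrec i (by omega)
            exact (sub_eq_of_eq_add' h2).symm
          have hzT : z • T (i+1) ∈ J' ^ (r - i) • (⊤ : Submodule R N) := by
            rw [hstep]
            refine Submodule.sub_mem _ ?_ (hAmem i (by omega))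
            exact Submodule.smul_mono_left
              (Ideal.pow_le_pow_right (by omega)) hTi
          have := Z (r - i) _ hzT
          have hee : r + 1 - (i + 1) = r - i := by omega
          rwa [hee]
    -- conclude coefficientwise
    have key : ∀ i, i ≤ r → ∀ d ∈ Finset.Nat.antidiagonalTuple k (r - i),
        G (Fin.snoc d i) ∈ Ideal.span (Set.range h) • (⊤ : Submodule R N) := by
      intro i hi d hd
      have hTi : T i ∈ J' ^ (r + 1 - i) • (⊤ : Submodule R N) := by
        rcases Nat.eq_zero_or_pos i with rfl | hipos
        · rw [hT0]; exact zero_mem _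
        · exact hTmem i hipos (by omega)
      have hTi1 : T (i+1) ∈ J' ^ (r - i) • (⊤ : Submodule R N) := by
        have := hTmem (i+1) (by omega) (by omega)
        rwa [(by omega : r + 1 - (i + 1) = r - i)] at this
      obtain ⟨W, hW⟩ := pow_smul_repr h' (r - i) (Submodule.neg_mem _ hTi1)
      -- B i - z • (-T (i+1)) = T i + u i
      have hBi : B i = (T i + u i) + z • (-T (i+1)) := by
        have hAi : A i = T i - z • T (i+1) :=
          eq_sub_of_add_eq (hTrec i (by omega)).symm
        have hBA : B i = A i + u i := by
          simp only [hA]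
          rw [if_pos hi]
          abel
        rw [hBA, hAi]
        module
      have hvmem : val h' (r - i) (fun d => G (Fin.snoc d i) - z • W d)
          ∈ J' ^ (r - i + 1) • (⊤ : Submodule R N) := by
        have : val h' (r - i) (fun d => G (Fin.snoc d i) - z • W d)
            = B i - z • val h' (r - i) W := by
          rw [val_sub]
          simp only [hB]
          congr 1
          exact val_rsmul h' (r-i) z W
        rw [this, ← hW, hBi]
        have : (T i + u i) + z • (-T (i+1)) - z • (-T (i+1)) = T i + u i := by abel
        rw [this]
        have hTi' : T i ∈ J' ^ (r - i + 1) • (⊤ : Submodule R N) := by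
          rwa [(by omega : r - i + 1 = r + 1 - i)]
        refine Submodule.add_mem _ hTi' ?_
        have : u i ∈ J' ^ (r + 1 - i) • (⊤ : Submodule R N) := val_mem_pow_smul h' (r+1-i) _
        rwa [(by omega : r + 1 - i = r - i + 1)] at this
      have hIH := IH h' hw' (r - i) (fun d => G (Fin.snoc d i) - z • W d) hvmem d hd
      have h1 : G (Fin.snoc d i) - z • W d ∈ Ideal.span (Set.range h) • (⊤ : Submodule R N) :=
        Submodule.smul_mono_left (Ideal.span_mono (by
          rintro x ⟨j, rfl⟩; exact ⟨j.castSucc, rfl⟩)) hIH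
      have h2 : z • W d ∈ Ideal.span (Set.range h) • (⊤ : Submodule R N) :=
        Submodule.smul_mem_smul (Ideal.subset_span ⟨Fin.last k, rfl⟩) Submodule.mem_top
      have := Submodule.add_mem _ h1 h2
      simpa using this
    intro d hd
    have hmem := Finset.Nat.mem_antidiagonalTuple.mp hd
    rw [Fin.sum_univ_castSucc] at hmem
    have hile : d (Fin.last k) ≤ r := hmem ▸ Nat.le_add_left _ _
    have hinit : Fin.init d ∈ Finset.Nat.antidiagonalTuple k (r - d (Fin.last k)) := by
      rw [Finset.Nat.mem_antidiagonalTuple]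
      have heq : ∑ i : Fin k, Fin.init d i = ∑ i : Fin k, d i.castSucc :=
        Finset.sum_congr rfl fun i _ => rfl
      rw [heq]
      omega
    have := key (d (Fin.last k)) hile (Fin.init d) hinit
    rwa [Fin.snoc_init_self] at this

end ReesAux

/-- **Rees's theorem.** Let `N` be an `R`-module, `h₁, …, h_k` an `N`-regular sequence
in `R`, and `J = ⟨h₁, …, h_k⟩`. If `F` is a homogeneous polynomial of degree `r` in
indeterminates `y₁, …, y_k` with coefficients in `N` (encoded as a finitely supported
family of coefficients indexed by exponent vectors of total degree `r`) and
`F(h₁, …, h_k) ∈ J^{r+1}·N`, then all coefficients of `F` lie in `J·N`. -/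
theorem rees_theorem {R N : Type} [CommRing R] [AddCommGroup N] [Module R N]
    {k : ℕ} (h : Fin k → R)
    (hreg : RingTheory.Sequence.IsRegular N (List.ofFn h))
    (J : Ideal R) (hJ : J = Ideal.span (Set.range h))
    (r : ℕ) (F : (Fin k →₀ ℕ) →₀ N)
    (hhom : ∀ d ∈ F.support, (d.sum fun _ e => e) = r)
    (hF : (F.sum fun d c => (∏ i, h i ^ d i) • c) ∈ J ^ (r + 1) • (⊤ : Submodule R N)) :
    ∀ d, F d ∈ J • (⊤ : Submodule R N) := by
  classical
  subst hJ
  set G : (Fin k → ℕ) → N := fun d => F (Finsupp.equivFunOnFinite.symm d) with hG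
  have hsupp : F.support ⊆ (Finset.Nat.antidiagonalTuple k r).image
      (Finsupp.equivFunOnFinite.symm) := by
    intro d hd
    refine Finset.mem_image.mpr ⟨⇑d, ?_, ?_⟩
    · rw [Finset.Nat.mem_antidiagonalTuple]
      rw [← hhom d hd]
      exact (Finsupp.sum_fintype d (fun _ e => e) (fun _ => rfl)).symm
    · exact Finsupp.equivFunOnFinite.symm_apply_apply d
  have hval : ReesAux.val h r G = F.sum fun d c => (∏ i, h i ^ d i) • c := by
    rw [Finsupp.sum, Finset.sum_subset hsupp (fun d _ hd => by
      rw [Finsupp.notMem_support_iff.mp hd, smul_zero])]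
    rw [Finset.sum_image (fun x _ y _ hxy => Finsupp.equivFunOnFinite.symm.injective hxy)]
    refine Finset.sum_congr rfl fun e _ => ?_
    simp only [ReesAux.mon, hG]
    congr 1
  have hcore := ReesAux.core k h hreg.toIsWeaklyRegular r G (by rwa [hval])
  intro d
  by_cases hd : d ∈ F.support
  · have hmem : ⇑d ∈ Finset.Nat.antidiagonalTuple k r := by
      rw [Finset.Nat.mem_antidiagonalTuple, ← hhom d hd]
      exact (Finsupp.sum_fintype d (fun _ e => e) (fun _ => rfl)).symm
    have := hcore ⇑d hmem
    simpa [hG, Finsupp.equivFunOnFinite.symm_apply_apply d] using this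
  · rw [Finsupp.notMem_support_iff.mp hd]
    exact zero_mem _
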